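/- Let τ be a Hermitian unital linear functional on ℂ⟨x⟩ with restrictions τ_i := τ restricted to ℂ⟨x_i⟩. Then for every self-adjoint p ∈ ℂ⟨x⟩ one has χ_{orb,R}(τ) ≤ τ(p) + π_{orb,R}(p : (τ_i)); consequently χ_{orb,R}(τ) ≤ η_{orb,R}(τ). -/

import Mathlib

/-!
Orbital free pressure and its Legendre transform (Hiai–Ueda).

Common infrastructure: the free unital complex *-algebra on self-adjoint generators,
matrix microstate sets, the orbital free pressure, the orbital η-entropy, the orbital
free entropy; Lebesgue measure on self-adjoint matrices, the free pressure, free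
entropy and η-entropy; Gibbs (micro-)ensembles.

The Haar probability measures `γ_{U(N)}` on the unitary groups are formalized as a
family of left-invariant Borel probability measures (which uniquely determines them).
-/

open MeasureTheory Filter Topology
open scoped BigOperators ENNReal TensorProduct ComplexOrder

noncomputable section

namespace OrbFP

/-- The algebra of `N × N` complex matrices. -/
abbrev Mat (N : ℕ) := Matrix (Fin N) (Fin N) ℂ

/-- The normalized trace `tr_N`. -/
def trN (N : ℕ) (A : Mat N) : ℂ := A.trace / (N : ℂ)

/-- The (ℓ²-)operator norm of a matrix. -/
def opNorm {N : ℕ} (A : Mat N) : ℝ := ‖Matrix.toEuclideanCLM (𝕜 := ℂ) A‖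

/-- The unitary group `U(N)`. -/
abbrev UN (N : ℕ) := Matrix.unitaryGroup (Fin N) ℂ

instance (N : ℕ) : MeasurableSpace (UN N) := borel _
instance (N : ℕ) : BorelSpace (UN N) := ⟨rfl⟩
instance (N : ℕ) : MeasurableSpace (Mat N) := borel _
instance (N : ℕ) : BorelSpace (Mat N) := ⟨rfl⟩

/-- The free unital complex *-algebra on self-adjoint generators indexed by `X`. -/
abbrev FAlg (X : Type) := FreeAlgebra ℂ X

/-- Coefficient-wise complex conjugation on the free algebra. -/
def conjCoeff {X : Type} (p : FAlg X) : FAlg X :=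
  (FreeAlgebra.equivMonoidAlgebraFreeMonoid (R := ℂ) (X := X)).symm
    (MonoidAlgebra.ofCoeff (Finsupp.mapRange (starRingEnd ℂ) (map_zero _)
      (FreeAlgebra.equivMonoidAlgebraFreeMonoid (R := ℂ) (X := X) p).coeff))

/-- The star operation of the free complex *-algebra with self-adjoint generators:
reverse words (the `star` of `FreeAlgebra`) and conjugate the coefficients. -/
def fstar {X : Type} (p : FAlg X) : FAlg X := star (conjCoeff p)

/-- Self-adjointness in the free complex *-algebra. -/
def IsSA {X : Type} (p : FAlg X) : Prop := fstar p = p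

/-- A Hermitian unital linear functional. -/
def IsHermState {X : Type} (τ : FAlg X →ₗ[ℂ] ℂ) : Prop :=
  τ 1 = 1 ∧ ∀ p, τ (fstar p) = starRingEnd ℂ (τ p)

/-- Ordered product of a word of matrices. -/
def wordMat {N : ℕ} {κ : Type} (A : κ → Mat N) (w : List κ) : Mat N := (w.map A).prod

/-- Ordered product of a word of generators in the free algebra. -/
def wordAlg {κ : Type} (w : List κ) : FAlg κ := (w.map (FreeAlgebra.ι ℂ)).prod

/-- The microstate set `Γ_R(τ; N, m, δ)` of a functional on the free algebra on `κ`: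
tuples of self-adjoint matrices of operator norm at most `R` whose normalized trace of
every word of length `1 ≤ l ≤ m` is `δ`-close to the corresponding moment of `τ`. -/
def microSet {κ : Type} (R : ℝ) (τ : FAlg κ →ₗ[ℂ] ℂ) (N m : ℕ) (δ : ℝ) :
    Set (κ → Mat N) :=
  {A | (∀ j, (A j).IsHermitian ∧ opNorm (A j) ≤ R) ∧
    ∀ w : List κ, w ≠ [] → w.length ≤ m →
      ‖trN N (wordMat A w) - τ (wordAlg w)‖ < δ}

/-- `τ` has finite-dimensional approximants. -/
def HasFDA {κ : Type} (R : ℝ) (τ : FAlg κ →ₗ[ℂ] ℂ) : Prop :=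
  ∀ (m : ℕ) (δ : ℝ), 0 < δ → ∃ N, (microSet R τ N m δ).Nonempty

variable {ι : Type} [Fintype ι]

/-- The index of the generators `x_{ij}`, `i ∈ ι`, `1 ≤ j ≤ r i`. -/
abbrev gen (r : ι → ℕ) := Σ i : ι, Fin (r i)

/-- Evaluation of the full free algebra at a family of matrix tuples. -/
def evalA {r : ι → ℕ} {N : ℕ} (A : ∀ i, Fin (r i) → Mat N) :
    FAlg (gen r) →ₐ[ℂ] Mat N :=
  FreeAlgebra.lift ℂ fun p : gen r => A p.1 p.2

/-- The canonical embedding `ℂ⟨x_i⟩ → ℂ⟨x⟩`. -/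
def inclAlg (r : ι → ℕ) (i : ι) : FAlg (Fin (r i)) →ₐ[ℂ] FAlg (gen r) :=
  FreeAlgebra.lift ℂ fun j => FreeAlgebra.ι ℂ (⟨i, j⟩ : gen r)

/-- The restriction of a functional on `ℂ⟨x⟩` to `ℂ⟨x_i⟩`. -/
def restr {r : ι → ℕ} (τ : FAlg (gen r) →ₗ[ℂ] ℂ) (i : ι) :
    FAlg (Fin (r i)) →ₗ[ℂ] ℂ :=
  τ ∘ₗ (inclAlg r i).toLinearMap

/-- The embedding of the free algebra of a sub-system of the variables. -/
def inclSub {r : ι → ℕ} (P : ι → Prop) :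
    FAlg (gen fun i : Subtype P => r i.1) →ₐ[ℂ] FAlg (gen r) :=
  FreeAlgebra.lift ℂ fun p => FreeAlgebra.ι ℂ (⟨p.1.1, p.2⟩ : gen r)

/-- Restriction of a functional to a sub-system of the variables. -/
def restrSub {r : ι → ℕ} (P : ι → Prop) (τ : FAlg (gen r) →ₗ[ℂ] ℂ) :
    FAlg (gen fun i : Subtype P => r i.1) →ₗ[ℂ] ℂ :=
  τ ∘ₗ (inclSub P).toLinearMap

/-- The conjugated family `(V_i A_i V_i^*)_i`. -/
def conjFam {r : ι → ℕ} {N : ℕ} (V : ι → UN N) (A : ∀ i, Fin (r i) → Mat N) :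
    ∀ i, Fin (r i) → Mat N :=
  fun i j => (V i : Mat N) * A i j * star (V i : Mat N)

/-- The Gibbs weight `exp(-N² tr_N(h((V_i A_i V_i^*)_i)))`. -/
def gibbsWt {r : ι → ℕ} {N : ℕ} (h : FAlg (gen r)) (A : ∀ i, Fin (r i) → Mat N)
    (V : ι → UN N) : ℝ :=
  Real.exp (-(N : ℝ) ^ 2 * (trN N (evalA (conjFam V A) h)).re)

/-- The product `∏_i Γ_R(τ_i; N, m, δ)` of the microstate sets. -/
def microProd (R : ℝ) {r : ι → ℕ} (τs : ∀ i, FAlg (Fin (r i)) →ₗ[ℂ] ℂ)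
    (N m : ℕ) (δ : ℝ) : Set (∀ i, Fin (r i) → Mat N) :=
  {A | ∀ i, A i ∈ microSet R (τs i) N m δ}

/-- The finite-`N` orbital free pressure `π_{orb,R}(h : (τ_i); N, m, δ)`
(`-∞` when some microstate set is empty). -/
def piOrbN (γ : ∀ N, Measure (UN N)) (R : ℝ) {r : ι → ℕ} (h : FAlg (gen r))
    (τs : ∀ i, FAlg (Fin (r i)) →ₗ[ℂ] ℂ) (N m : ℕ) (δ : ℝ) : EReal :=
  ⨆ A ∈ microProd R τs N m δ,
    ((Real.log (∫ V : ι → UN N, gibbsWt h A V ∂(Measure.pi fun _ => γ N)) : ℝ) : EReal)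

/-- The orbital free pressure `π_{orb,R}(h : (τ_i))`. -/
def piOrb (γ : ∀ N, Measure (UN N)) (R : ℝ) {r : ι → ℕ} (h : FAlg (gen r))
    (τs : ∀ i, FAlg (Fin (r i)) →ₗ[ℂ] ℂ) : EReal :=
  ⨅ (m : ℕ) (δ : ℝ) (_ : 0 < δ),
    Filter.limsup
      (fun N : ℕ => ((((N : ℝ) ^ 2)⁻¹ : ℝ) : EReal) * piOrbN γ R h τs N m δ)
      Filter.atTop

/-- The "universal" `R`-norm `‖h‖_R`: the supremum of the operator norms of all
evaluations of `h` at families of self-adjoint matrices of norm at most `R`. -/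
def normR (R : ℝ) {r : ι → ℕ} (h : FAlg (gen r)) : ℝ :=
  sSup {t : ℝ | ∃ (N : ℕ) (A : ∀ i, Fin (r i) → Mat N),
    (∀ i j, (A i j).IsHermitian ∧ opNorm (A i j) ≤ R) ∧ t = opNorm (evalA A h)}

/-- The minus Legendre transform `inf_h (φ(h) + π_{orb,R}(h : (τ_i)))` of the orbital
free pressure, relative to `(τ_i)`. -/
def etaOrbRel (γ : ∀ N, Measure (UN N)) (R : ℝ) {r : ι → ℕ}
    (τ : FAlg (gen r) →ₗ[ℂ] ℂ) (τs : ∀ i, FAlg (Fin (r i)) →ₗ[ℂ] ℂ) : EReal :=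
  ⨅ (h : FAlg (gen r)) (_ : IsSA h),
    (((τ h).re : ℝ) : EReal) + piOrb γ R h τs

/-- The orbital `η`-entropy `η_{orb,R}(τ)`. -/
def etaOrb (γ : ∀ N, Measure (UN N)) (R : ℝ) {r : ι → ℕ}
    (τ : FAlg (gen r) →ₗ[ℂ] ℂ) : EReal :=
  etaOrbRel γ R τ (restr τ)

/-- The microstate set `Γ_R(τ; N, m, δ)` of a functional on the full free algebra. -/
def microFull (R : ℝ) {r : ι → ℕ} (τ : FAlg (gen r) →ₗ[ℂ] ℂ) (N m : ℕ) (δ : ℝ) :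
    Set (∀ i, Fin (r i) → Mat N) :=
  {A | (∀ i j, (A i j).IsHermitian ∧ opNorm (A i j) ≤ R) ∧
    ∀ w : List (gen r), w ≠ [] → w.length ≤ m →
      ‖trN N (wordMat (fun p : gen r => A p.1 p.2) w) - τ (wordAlg w)‖ < δ}

/-- `τ` (on the full algebra) has finite-dimensional approximants. -/
def HasFDAFull (R : ℝ) {r : ι → ℕ} (τ : FAlg (gen r) →ₗ[ℂ] ℂ) : Prop :=
  ∀ (m : ℕ) (δ : ℝ), 0 < δ → ∃ N, (microFull R τ N m δ).Nonempty

/-- The orbital microstate set `Γ_orb(τ : (A_i); N, m, δ)`. -/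
def orbSet (R : ℝ) {r : ι → ℕ} (τ : FAlg (gen r) →ₗ[ℂ] ℂ) {N : ℕ}
    (A : ∀ i, Fin (r i) → Mat N) (m : ℕ) (δ : ℝ) : Set (ι → UN N) :=
  {V | conjFam V A ∈ microFull R τ N m δ}

/-- The orbital free entropy `χ_{orb,R}(τ)`. -/
def chiOrb (γ : ∀ N, Measure (UN N)) (R : ℝ) {r : ι → ℕ}
    (τ : FAlg (gen r) →ₗ[ℂ] ℂ) : EReal :=
  ⨅ (m : ℕ) (δ : ℝ) (_ : 0 < δ),
    Filter.limsup
      (fun N : ℕ => ((((N : ℝ) ^ 2)⁻¹ : ℝ) : EReal) *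
        ⨆ A ∈ microProd R (restr τ) N m δ,
          ENNReal.log ((Measure.pi fun _ : ι => γ N) (orbSet R τ A m δ)))
      Filter.atTop

/-- A tracial `R₀`-state on `ℂ⟨x⟩`. -/
def IsTracialRState {r : ι → ℕ} (R₀ : ℝ) (τ : FAlg (gen r) →ₗ[ℂ] ℂ) : Prop :=
  IsHermState τ ∧ (∀ p q, τ (p * q) = τ (q * p)) ∧
  (∀ p, 0 ≤ (τ (fstar p * p)).re) ∧
  ∀ (i : ι) (j : Fin (r i)) (k : ℕ) (p : FAlg (gen r)),
    (τ (fstar p * FreeAlgebra.ι ℂ (⟨i, j⟩ : gen r) ^ (2 * k) * p)).re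
      ≤ R₀ ^ (2 * k) * (τ (fstar p * p)).re

/-- `τ` is the free product of its restrictions `τ_i`: alternating words in the
`τ`-centered subalgebras `ℂ⟨x_i⟩` have vanishing `τ`-value. -/
def IsFreeProduct {r : ι → ℕ} (τ : FAlg (gen r) →ₗ[ℂ] ℂ) : Prop :=
  ∀ (k : ℕ), 0 < k → ∀ (idx : Fin k → ι) (p : ∀ l, FAlg (Fin (r (idx l)))),
    (∀ l, τ (inclAlg r (idx l) (p l)) = 0) →
    (∀ (l : Fin k) (hl : (l : ℕ) + 1 < k), idx l ≠ idx ⟨(l : ℕ) + 1, hl⟩) →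
    τ ((List.ofFn fun l => inclAlg r (idx l) (p l)).prod) = 0

/-- The partition function `Z_N^{(h, Ξ(N))}` of the orbital Gibbs micro-ensemble. -/
def ZOrbN (γ : ∀ N, Measure (UN N)) {r : ι → ℕ} (h : FAlg (gen r)) {N : ℕ}
    (A : ∀ i, Fin (r i) → Mat N) : ℝ :=
  ∫ V : ι → UN N, gibbsWt h A V ∂(Measure.pi fun _ => γ N)

/-- The orbital Gibbs micro-ensemble `μ_N^{(h, Ξ(N))}`. -/
def muOrbN (γ : ∀ N, Measure (UN N)) {r : ι → ℕ} (h : FAlg (gen r)) {N : ℕ}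
    (A : ∀ i, Fin (r i) → Mat N) : Measure (ι → UN N) :=
  (Measure.pi fun _ => γ N).withDensity
    fun V => ENNReal.ofReal (gibbsWt h A V / ZOrbN γ h A)

/-! ### Lebesgue measure on self-adjoint matrices and one-variable quantities -/

/-- The parametrization of self-adjoint matrices by the diagonal entries and the real
and imaginary parts of the above-diagonal entries. -/
def matOfCoord (N : ℕ) (f : Fin N × Fin N → ℝ) : Mat N :=
  Matrix.of fun p q =>
    if p = q then (f (p, p) : ℂ)
    else if p < q then (f (p, q) : ℂ) + (f (q, p) : ℂ) * Complex.I
    else (f (q, p) : ℂ) - (f (p, q) : ℂ) * Complex.I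

/-- The Lebesgue measure `Λ_N` on self-adjoint `N × N` matrices. -/
def LambdaMat (N : ℕ) : Measure (Mat N) :=
  Measure.map (matOfCoord N) (volume : Measure (Fin N × Fin N → ℝ))

/-- The product Lebesgue measure `Λ_N^{⊗n}` on `n`-tuples of self-adjoint matrices. -/
def LambdaPow (n N : ℕ) : Measure (Fin n → Mat N) :=
  Measure.map (fun f i => matOfCoord N (f i))
    (volume : Measure (Fin n → Fin N × Fin N → ℝ))

/-- Evaluation of a polynomial in `n` single variables at an `n`-tuple of matrices. -/
def evalSingle {n : ℕ} {N : ℕ} (A : Fin n → Mat N) :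
    FAlg (gen fun _ : Fin n => 1) →ₐ[ℂ] Mat N :=
  evalA fun i (_ : Fin 1) => A i

/-- The set `((M_N(ℂ)^{sa})_R)^n`. -/
def ballR (n N : ℕ) (R : ℝ) : Set (Fin n → Mat N) :=
  {A | ∀ i, (A i).IsHermitian ∧ opNorm (A i) ≤ R}

/-- The partition function `Z_{R,N}^h`. -/
def ZR (n N : ℕ) (R : ℝ) (h : FAlg (gen fun _ : Fin n => 1)) : ℝ :=
  ∫ A in ballR n N R,
    Real.exp (-(N : ℝ) ^ 2 * (trN N (evalSingle A h)).re) ∂(LambdaPow n N)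

/-- The free pressure `π_R(h)`. -/
def piR (n : ℕ) (R : ℝ) (h : FAlg (gen fun _ : Fin n => 1)) : EReal :=
  Filter.limsup
    (fun N : ℕ => ((((N : ℝ) ^ 2)⁻¹ : ℝ) : EReal) * ((Real.log (ZR n N R h) : ℝ) : EReal)
      + ((((n : ℝ) / 2 * Real.log N) : ℝ) : EReal))
    Filter.atTop

/-- The Gibbs micro-ensemble `λ_{R,N}^h`. -/
def lambdaGibbs (n N : ℕ) (R : ℝ) (h : FAlg (gen fun _ : Fin n => 1)) :
    Measure (Fin n → Mat N) :=
  ((LambdaPow n N).restrict (ballR n N R)).withDensity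
    fun A => ENNReal.ofReal
      (Real.exp (-(N : ℝ) ^ 2 * (trN N (evalSingle A h)).re) / ZR n N R h)

/-- The microstate free entropy `χ_R` of a single-variable functional. -/
def chiR1 (R : ℝ) (τ : FAlg (Fin 1) →ₗ[ℂ] ℂ) : EReal :=
  ⨅ (m : ℕ) (δ : ℝ) (_ : 0 < δ),
    Filter.limsup
      (fun N : ℕ => ((((N : ℝ) ^ 2)⁻¹ : ℝ) : EReal) *
          ENNReal.log (LambdaMat N {B : Mat N | (fun _ : Fin 1 => B) ∈ microSet R τ N m δ})
        + ((((1 : ℝ) / 2 * Real.log N) : ℝ) : EReal))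
      Filter.atTop

/-- The microstate free entropy `χ_R` of a functional on `n` single variables. -/
def chiRn (n : ℕ) (R : ℝ) (σ : FAlg (gen fun _ : Fin n => 1) →ₗ[ℂ] ℂ) : EReal :=
  ⨅ (m : ℕ) (δ : ℝ) (_ : 0 < δ),
    Filter.limsup
      (fun N : ℕ => ((((N : ℝ) ^ 2)⁻¹ : ℝ) : EReal) *
          ENNReal.log (LambdaPow n N
            {A : Fin n → Mat N | (fun i (_ : Fin 1) => A i) ∈ microFull R σ N m δ})
        + ((((n : ℝ) / 2 * Real.log N) : ℝ) : EReal))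
      Filter.atTop

/-- The `η`-entropy `η_R(τ)`, the minus Legendre transform of the free pressure. -/
def etaR (n : ℕ) (R : ℝ) (τ : FAlg (gen fun _ : Fin n => 1) →ₗ[ℂ] ℂ) : EReal :=
  ⨅ (h : FAlg (gen fun _ : Fin n => 1)) (_ : IsSA h),
    (((τ h).re : ℝ) : EReal) + piR n R h

/-! ### The doubled (tensor) orbital free pressure -/

/-- The algebraic tensor product `ℂ⟨x⟩ ⊗ ℂ⟨x⟩`. -/
abbrev TAlg (r : ι → ℕ) := TensorProduct ℂ (FAlg (gen r)) (FAlg (gen r))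

/-- The functional `τ ⊗ τ` on `ℂ⟨x⟩ ⊗ ℂ⟨x⟩`. -/
def tensFun {r : ι → ℕ} (τ : FAlg (gen r) →ₗ[ℂ] ℂ) : TAlg r →ₗ[ℂ] ℂ :=
  (TensorProduct.lid ℂ ℂ).toLinearMap ∘ₗ TensorProduct.map τ τ

/-- The normalized trace as a linear map. -/
def trLin (N : ℕ) : Mat N →ₗ[ℂ] ℂ := (N : ℂ)⁻¹ • Matrix.traceLinearMap (Fin N) ℂ ℂ

/-- The functional `tr_N ⊗ tr_N` on `M_N(ℂ) ⊗ M_N(ℂ)`. -/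
def tr2 (N : ℕ) : TensorProduct ℂ (Mat N) (Mat N) →ₗ[ℂ] ℂ :=
  (TensorProduct.lid ℂ ℂ).toLinearMap ∘ₗ TensorProduct.map (trLin N) (trLin N)

/-- Evaluation of `ℂ⟨x⟩ ⊗ ℂ⟨x⟩` at a family of matrix tuples. -/
def evalT {r : ι → ℕ} {N : ℕ} (A : ∀ i, Fin (r i) → Mat N) :
    TAlg r →ₐ[ℂ] TensorProduct ℂ (Mat N) (Mat N) :=
  Algebra.TensorProduct.map (evalA A) (evalA A)

/-- The finite-`N` doubled orbital free pressure `π^{(2)}_{orb,R}(p : (τ_i); N, m, δ)`. -/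
def pi2OrbN (γ : ∀ N, Measure (UN N)) (R : ℝ) {r : ι → ℕ} (p : TAlg r)
    (τs : ∀ i, FAlg (Fin (r i)) →ₗ[ℂ] ℂ) (N m : ℕ) (δ : ℝ) : EReal :=
  ⨆ A ∈ microProd R τs N m δ,
    ((Real.log (∫ V : ι → UN N,
        Real.exp (-(N : ℝ) ^ 2 * (tr2 N (evalT (conjFam V A) p)).re)
        ∂(Measure.pi fun _ => γ N)) : ℝ) : EReal)

/-- The doubled orbital free pressure `π^{(2)}_{orb,R}(p : (τ_i))`. -/
def pi2Orb (γ : ∀ N, Measure (UN N)) (R : ℝ) {r : ι → ℕ} (p : TAlg r)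
    (τs : ∀ i, FAlg (Fin (r i)) →ₗ[ℂ] ℂ) : EReal :=
  ⨅ (m : ℕ) (δ : ℝ) (_ : 0 < δ),
    Filter.limsup
      (fun N : ℕ => ((((N : ℝ) ^ 2)⁻¹ : ℝ) : EReal) * pi2OrbN γ R p τs N m δ)
      Filter.atTop

/-! ### Auxiliary lemmas for Statement 10 -/

section Aux10

open scoped Matrix.Norms.L2Operator

/-! #### EReal helpers -/

private lemma ereal_addK_le_iff (K : ℝ) (a b : EReal) :
    a + (K : EReal) ≤ b + (K : EReal) ↔ a ≤ b := by
  induction a using EReal.rec with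
  | bot => simp [EReal.bot_add]
  | top =>
      rw [EReal.top_add_coe]
      induction b using EReal.rec with
      | bot => simp [EReal.bot_add]
      | coe b =>
          rw [← EReal.coe_add]
          simp only [top_le_iff]
          constructor
          · intro h; exact absurd h (EReal.coe_ne_top _)
          · intro h; exact absurd h (by simp)
      | top => simp
  | coe a =>
      induction b using EReal.rec with
      | bot =>
          rw [EReal.bot_add, ← EReal.coe_add]
          simp only [le_bot_iff]
          constructor
          · intro h; exact absurd h (EReal.coe_ne_bot _)
          · intro h; exact absurd h (by simp)
      | coe b =>
          rw [← EReal.coe_add, ← EReal.coe_add, EReal.coe_le_coe_iff,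
            EReal.coe_le_coe_iff]
          exact add_le_add_iff_right K
      | top => simp [EReal.top_add_coe]

private lemma ereal_add_neg_cancel (K : ℝ) (a : EReal) :
    (a + (K : EReal)) + ((-K : ℝ) : EReal) = a := by
  induction a using EReal.rec with
  | bot => simp [EReal.bot_add]
  | top => rw [EReal.top_add_coe, EReal.top_add_coe]
  | coe a => rw [← EReal.coe_add, ← EReal.coe_add]; norm_num

/-- Adding a real constant, as an order isomorphism of `EReal`. -/
private def addKIso (K : ℝ) : EReal ≃o EReal where
  toFun x := x + (K : EReal)
  invFun x := x + ((-K : ℝ) : EReal)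
  left_inv x := ereal_add_neg_cancel K x
  right_inv x := by
    have h := ereal_add_neg_cancel (-K) x
    rw [neg_neg] at h
    exact h
  map_rel_iff' := @fun a b => ereal_addK_le_iff K a b

private lemma addKIso_apply (K : ℝ) (x : EReal) : addKIso K x = x + (K : EReal) := rfl

private lemma ereal_le_of_forall_eps {a b : EReal}
    (h : ∀ ε : ℝ, 0 < ε → a ≤ b + (ε : EReal)) : a ≤ b := by
  induction b using EReal.rec with
  | bot => simpa [EReal.bot_add] using h 1 one_pos
  | top => exact le_top
  | coe b =>
      induction a using EReal.rec with
      | bot => exact bot_le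
      | top =>
          exfalso
          have := h 1 one_pos
          rw [← EReal.coe_add] at this
          exact (not_le.2 (EReal.coe_lt_top (b + 1))) this
      | coe a =>
          have : a ≤ b := by
            refine le_of_forall_pos_le_add fun ε hε => ?_
            have := h ε hε
            rw [← EReal.coe_add, EReal.coe_le_coe_iff] at this
            exact this
          exact EReal.coe_le_coe_iff.2 this

private lemma ereal_mul_add_le (c d : ℝ) (hc : 0 < c) (P : EReal) :
    (c : EReal) * (P + (d : EReal)) ≤ (c : EReal) * P + ((c * d : ℝ) : EReal) := by
  induction P using EReal.rec with
  | bot =>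
      rw [EReal.bot_add, EReal.mul_bot_of_pos (by exact_mod_cast hc), EReal.bot_add]
  | top =>
      rw [EReal.top_add_coe, EReal.mul_top_of_pos (by exact_mod_cast hc),
        EReal.top_add_coe]
  | coe P =>
      rw [← EReal.coe_add, ← EReal.coe_mul, ← EReal.coe_mul, ← EReal.coe_add,
        EReal.coe_le_coe_iff, mul_add]

/-! #### Operator norm, conjugation and compactness facts -/

private lemma opNorm_conj {N : ℕ} (V : UN N) (B : Mat N) :
    opNorm ((V : Mat N) * B * star (V : Mat N)) = opNorm B := by
  set φ := Matrix.toEuclideanCLM (𝕜 := ℂ) (n := Fin N) with hφ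
  have hmem : φ (V : Mat N) ∈ unitary (EuclideanSpace ℂ (Fin N) →L[ℂ] EuclideanSpace ℂ (Fin N)) := by
    have hv : (V : Mat N) ∈ unitary (Mat N) := V.2
    rw [Unitary.mem_iff] at hv ⊢
    constructor
    · rw [← map_star, ← map_mul, hv.1, map_one]
    · rw [← map_star, ← map_mul, hv.2, map_one]
  show ‖φ ((V : Mat N) * B * star (V : Mat N))‖ = ‖φ B‖
  rw [map_mul, map_mul, map_star]
  rw [CStarRing.norm_mul_mem_unitary _ (Unitary.star_mem hmem),
    CStarRing.norm_mem_unitary_mul _ hmem]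

private lemma isHermitian_conj {N : ℕ} (V : UN N) {B : Mat N} (hB : B.IsHermitian) :
    ((V : Mat N) * B * star (V : Mat N)).IsHermitian := by
  have hsB : star B = B := by rw [Matrix.star_eq_conjTranspose]; exact hB
  have hkey : star ((V : Mat N) * B * star (V : Mat N)) =
      (V : Mat N) * B * star (V : Mat N) := by
    rw [star_mul, star_mul, star_star, hsB, mul_assoc]
  rw [Matrix.star_eq_conjTranspose] at hkey
  exact hkey

private instance compactUN (N : ℕ) : CompactSpace (UN N) := by
  have h1 : IsClosed ((Matrix.unitaryGroup (Fin N) ℂ : Set (Mat N))) := by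
    have : (Matrix.unitaryGroup (Fin N) ℂ : Set (Mat N)) =
        {A : Mat N | star A * A = 1} ∩ {A : Mat N | A * star A = 1} := by
      ext A
      simpa using Unitary.mem_iff
    rw [this]
    exact (isClosed_eq (continuous_star.mul continuous_id) continuous_const).inter
      (isClosed_eq (continuous_id.mul continuous_star) continuous_const)
  have h2 : Bornology.IsBounded ((Matrix.unitaryGroup (Fin N) ℂ : Set (Mat N))) := by
    refine (Metric.isBounded_closedBall (x := (0 : Mat N))
      (r := ‖(1 : Mat N)‖ + 1)).subset ?_
    intro A hA
    rw [Metric.mem_closedBall, dist_zero_right]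
    have hsq : ‖A‖ * ‖A‖ = ‖(1 : Mat N)‖ := by
      rw [← CStarRing.norm_star_mul_self, (Unitary.mem_iff.1 hA).1]
    nlinarith [norm_nonneg A, norm_nonneg (1 : Mat N)]
  exact isCompact_iff_compactSpace.mp (Metric.isCompact_of_isClosed_isBounded h1 h2)

/-! #### Free algebra word lemmas -/

private lemma evalA_ι {n : ℕ} {r : Fin n → ℕ} {N : ℕ} (A : ∀ i, Fin (r i) → Mat N)
    (x : gen r) : evalA A (FreeAlgebra.ι ℂ x) = A x.1 x.2 :=
  FreeAlgebra.lift_ι_apply _ _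

private lemma evalA_wordAlg {n : ℕ} {r : Fin n → ℕ} {N : ℕ} (B : ∀ i, Fin (r i) → Mat N)
    (w : List (gen r)) :
    evalA B (wordAlg w) = wordMat (fun q : gen r => B q.1 q.2) w := by
  unfold wordAlg wordMat
  rw [map_list_prod, List.map_map]
  congr 1
  ext x
  simp [Function.comp, evalA_ι]

private lemma wordAlg_append {κ : Type} (w w' : List κ) :
    wordAlg (w ++ w') = wordAlg w * wordAlg w' := by
  unfold wordAlg
  rw [List.map_append, List.prod_append]

private lemma span_wordAlg {κ : Type} :
    Submodule.span ℂ (Set.range (wordAlg : List κ → FAlg κ)) = ⊤ := by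
  rw [eq_top_iff]
  intro p hp
  clear hp
  induction p using FreeAlgebra.induction with
  | grade0 c =>
      rw [Algebra.algebraMap_eq_smul_one]
      have h1 : (1 : FAlg κ) ∈ Set.range (wordAlg : List κ → FAlg κ) := ⟨[], rfl⟩
      exact Submodule.smul_mem _ c (Submodule.subset_span h1)
  | grade1 x =>
      have h1 : FreeAlgebra.ι ℂ x ∈ Set.range (wordAlg : List κ → FAlg κ) := by
        refine ⟨[x], ?_⟩
        show ([FreeAlgebra.ι ℂ x]).prod = _
        rw [List.prod_singleton]
      exact Submodule.subset_span h1
  | mul a b ha hb =>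
      have hmul : a * b ∈ Submodule.span ℂ (Set.range (wordAlg : List κ → FAlg κ)) *
          Submodule.span ℂ (Set.range (wordAlg : List κ → FAlg κ)) :=
        Submodule.mul_mem_mul ha hb
      rw [Submodule.span_mul_span] at hmul
      refine Submodule.span_le.2 ?_ hmul
      rintro _ ⟨_, ⟨w, rfl⟩, _, ⟨w', rfl⟩, rfl⟩
      exact Submodule.subset_span ⟨w ++ w', wordAlg_append w w'⟩
  | add a b ha hb => exact Submodule.add_mem _ ha hb

/-! #### Microstate set monotonicity -/

private lemma microFull_mono {n : ℕ} {r : Fin n → ℕ} {R : ℝ} {τ : FAlg (gen r) →ₗ[ℂ] ℂ}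
    {N m m' : ℕ} {δ δ' : ℝ} (hm : m ≤ m') (hδ : δ' ≤ δ) :
    microFull R τ N m' δ' ⊆ microFull R τ N m δ := by
  rintro B ⟨h1, h2⟩
  exact ⟨h1, fun w hw hl => lt_of_lt_of_le (h2 w hw (hl.trans hm)) hδ⟩

private lemma microSet_mono {κ : Type} {R : ℝ} {τ : FAlg κ →ₗ[ℂ] ℂ}
    {N m m' : ℕ} {δ δ' : ℝ} (hm : m ≤ m') (hδ : δ' ≤ δ) :
    microSet R τ N m' δ' ⊆ microSet R τ N m δ := by
  rintro B ⟨h1, h2⟩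
  exact ⟨h1, fun w hw hl => lt_of_lt_of_le (h2 w hw (hl.trans hm)) hδ⟩

private lemma microProd_mono {n : ℕ} {r : Fin n → ℕ} {R : ℝ}
    {τs : ∀ i, FAlg (Fin (r i)) →ₗ[ℂ] ℂ} {N m m' : ℕ} {δ δ' : ℝ}
    (hm : m ≤ m') (hδ : δ' ≤ δ) :
    microProd R τs N m' δ' ⊆ microProd R τs N m δ :=
  fun _ hA i => microSet_mono hm hδ (hA i)

/-! #### Moment approximation -/

private lemma trN_one {N : ℕ} (hN : 1 ≤ N) : trN N (1 : Mat N) = 1 := by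
  unfold trN
  rw [Matrix.trace_one]
  simp only [Fintype.card_fin]
  rw [div_self]
  exact_mod_cast (by omega : N ≠ 0)

private lemma momentApprox {n : ℕ} {r : Fin n → ℕ} (R : ℝ) (τ : FAlg (gen r) →ₗ[ℂ] ℂ)
    (hτ1 : τ 1 = 1) (p : FAlg (gen r)) :
    ∃ (m₀ : ℕ) (C : ℝ), 0 ≤ C ∧ ∀ N : ℕ, 1 ≤ N → ∀ δ : ℝ,
      ∀ B ∈ microFull R τ N m₀ δ,
        ‖trN N (evalA B p) - τ p‖ ≤ C * δ := by
  set P : Submodule ℂ (FAlg (gen r)) :=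
    { carrier := {p | ∃ (m₀ : ℕ) (C : ℝ), 0 ≤ C ∧ ∀ N : ℕ, 1 ≤ N → ∀ δ : ℝ,
        ∀ B ∈ microFull R τ N m₀ δ, ‖trN N (evalA B p) - τ p‖ ≤ C * δ}
      zero_mem' := by
        refine ⟨0, 0, le_refl 0, fun N hN δ B hB => ?_⟩
        rw [map_zero, map_zero]
        unfold trN
        rw [Matrix.trace_zero, zero_div, sub_zero, norm_zero, zero_mul]
      add_mem' := by
        rintro a b ⟨m₁, C₁, hC₁, h₁⟩ ⟨m₂, C₂, hC₂, h₂⟩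
        refine ⟨max m₁ m₂, C₁ + C₂, by linarith, fun N hN δ B hB => ?_⟩
        have hB₁ := microFull_mono (le_max_left m₁ m₂) (le_refl δ) hB
        have hB₂ := microFull_mono (le_max_right m₁ m₂) (le_refl δ) hB
        have e1 := h₁ N hN δ B hB₁
        have e2 := h₂ N hN δ B hB₂
        have key : trN N (evalA B (a + b)) - τ (a + b) =
            (trN N (evalA B a) - τ a) + (trN N (evalA B b) - τ b) := by
          rw [map_add, map_add]
          unfold trN
          rw [Matrix.trace_add, add_div]
          ring
        rw [key, add_mul]
        exact (norm_add_le _ _).trans (add_le_add e1 e2)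
      smul_mem' := by
        rintro c a ⟨m₁, C₁, hC₁, h₁⟩
        refine ⟨m₁, ‖c‖ * C₁, mul_nonneg (norm_nonneg c) hC₁,
          fun N hN δ B hB => ?_⟩
        have e1 := h₁ N hN δ B hB
        have key : trN N (evalA B (c • a)) - τ (c • a) =
            c * (trN N (evalA B a) - τ a) := by
          have e1 : evalA B (c • a) = c • evalA B a := _root_.map_smul (evalA B) c a
          have e2 : τ (c • a) = c * τ a := by rw [_root_.map_smul, smul_eq_mul]
          rw [e1, e2]
          unfold trN
          rw [Matrix.trace_smul, smul_eq_mul]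
          ring
        rw [key, norm_mul, mul_assoc]
        exact mul_le_mul_of_nonneg_left e1 (norm_nonneg c) }
  have hword : ∀ w : List (gen r), wordAlg w ∈ P := by
    intro w
    rcases w with _ | ⟨x, w⟩
    · refine ⟨0, 0, le_refl 0, fun N hN δ B hB => ?_⟩
      have h1 : wordAlg ([] : List (gen r)) = 1 := rfl
      rw [h1, map_one, hτ1, trN_one hN, sub_self, norm_zero, zero_mul]
    · refine ⟨(x :: w).length, 1, zero_le_one, fun N hN δ B hB => ?_⟩
      rw [one_mul, evalA_wordAlg]
      exact (hB.2 (x :: w) (List.cons_ne_nil x w) le_rfl).le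
  have hspan : Submodule.span ℂ (Set.range (wordAlg : List (gen r) → FAlg (gen r))) ≤ P :=
    Submodule.span_le.2 (by rintro _ ⟨w, rfl⟩; exact hword w)
  have hp : p ∈ P := hspan (by rw [span_wordAlg]; exact Submodule.mem_top)
  exact hp

/-! #### Continuity -/

private lemma continuous_evalA_conj {n : ℕ} {r : Fin n → ℕ} {N : ℕ}
    (A : ∀ i, Fin (r i) → Mat N) (h : FAlg (gen r)) :
    Continuous fun V : Fin n → UN N => evalA (conjFam V A) h := by
  induction h using FreeAlgebra.induction with
  | grade0 c => simpa using (continuous_const : Continuous fun _ : Fin n → UN N =>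
      algebraMap ℂ (Mat N) c)
  | grade1 x =>
      simp only [evalA_ι]
      have hV : Continuous fun V : Fin n → UN N => ((V x.1 : Mat N)) :=
        continuous_subtype_val.comp (continuous_apply x.1)
      exact (hV.mul continuous_const).mul hV.star
  | mul a b ha hb => simp only [map_mul]; exact ha.mul hb
  | add a b ha hb => simp only [map_add]; exact ha.add hb

private lemma continuous_trN_evalA_conj {n : ℕ} {r : Fin n → ℕ} {N : ℕ}
    (A : ∀ i, Fin (r i) → Mat N) (h : FAlg (gen r)) :
    Continuous fun V : Fin n → UN N => trN N (evalA (conjFam V A) h) :=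
  ((continuous_evalA_conj A h).matrix_trace.div_const _)

private lemma continuous_gibbsWt {n : ℕ} {r : Fin n → ℕ} {N : ℕ}
    (h : FAlg (gen r)) (A : ∀ i, Fin (r i) → Mat N) :
    Continuous (gibbsWt h A) := by
  unfold gibbsWt
  exact Real.continuous_exp.comp (continuous_const.mul
    (Complex.continuous_re.comp (continuous_trN_evalA_conj A h)))

/-! #### Measurability of the orbital microstate set -/

private lemma orbSet_measurable {n : ℕ} {r : Fin n → ℕ} {R : ℝ}
    (τ : FAlg (gen r) →ₗ[ℂ] ℂ) {N : ℕ} {A : ∀ i, Fin (r i) → Mat N}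
    (hA : ∀ i j, (A i j).IsHermitian ∧ opNorm (A i j) ≤ R) (m : ℕ) (δ : ℝ) :
    MeasurableSet (orbSet R τ A m δ) := by
  have hset : orbSet R τ A m δ = ⋂ w : List (gen r),
      {V : Fin n → UN N | w ≠ [] → w.length ≤ m →
        ‖trN N (evalA (conjFam V A) (wordAlg w)) - τ (wordAlg w)‖ < δ} := by
    ext V
    simp only [orbSet, microFull, Set.mem_setOf_eq, Set.mem_iInter]
    constructor
    · intro hV w
      have := hV.2 w
      rwa [← evalA_wordAlg (conjFam V A) w] at this
    · intro hV
      refine ⟨fun i j => ?_, fun w hw hl => ?_⟩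
      · exact ⟨isHermitian_conj (V i) (hA i j).1,
          le_of_eq_of_le (opNorm_conj (V i) (A i j)) (hA i j).2⟩
      · have := hV w hw hl
        rwa [evalA_wordAlg (conjFam V A) w] at this
  rw [hset]
  refine MeasurableSet.iInter fun w => ?_
  by_cases hw : w = []
  · simp [hw]
  by_cases hl : w.length ≤ m
  · have : {V : Fin n → UN N | w ≠ [] → w.length ≤ m →
        ‖trN N (evalA (conjFam V A) (wordAlg w)) - τ (wordAlg w)‖ < δ} =
        (fun V : Fin n → UN N =>
          ‖trN N (evalA (conjFam V A) (wordAlg w)) - τ (wordAlg w)‖) ⁻¹'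
          (Set.Iio δ) := by
      ext V; simp [hw, hl]
    rw [this]
    have hcont : Continuous fun V : Fin n → UN N =>
        ‖trN N (evalA (conjFam V A) (wordAlg w)) - τ (wordAlg w)‖ :=
      continuous_norm.comp
        ((continuous_trN_evalA_conj A (wordAlg w)).sub continuous_const)
    exact hcont.measurable measurableSet_Iio
  · have : {V : Fin n → UN N | w ≠ [] → w.length ≤ m →
        ‖trN N (evalA (conjFam V A) (wordAlg w)) - τ (wordAlg w)‖ < δ} =
        Set.univ := by
      ext V; simp [hl]
    rw [this]
    exact MeasurableSet.univ

/-! #### The key integral inequality -/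

private lemma key_log_ineq {n : ℕ} {r : Fin n → ℕ} {N : ℕ}
    (γN : Measure (UN N)) [IsProbabilityMeasure γN]
    (p : FAlg (gen r)) (A : ∀ i, Fin (r i) → Mat N)
    {s : Set (Fin n → UN N)} (hs : MeasurableSet s) (K : ℝ)
    (hK : ∀ V ∈ s, (trN N (evalA (conjFam V A) p)).re ≤ K) :
    ENNReal.log ((Measure.pi fun _ : Fin n => γN) s) ≤
      ((Real.log (∫ V : Fin n → UN N, gibbsWt p A V ∂(Measure.pi fun _ => γN)) : ℝ) : EReal)
        + (((N : ℝ) ^ 2 * K : ℝ) : EReal) := by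
  set μ := (Measure.pi fun _ : Fin n => γN)
  by_cases hμs : μ s = 0
  · rw [hμs, ENNReal.log_zero]; exact bot_le
  have hfin : μ s ≠ ⊤ := measure_ne_top μ s
  have htr : 0 < (μ s).toReal := ENNReal.toReal_pos hμs hfin
  have hcont : Continuous (gibbsWt p A) := continuous_gibbsWt p A
  have hnonneg : ∀ V, 0 ≤ gibbsWt p A V := fun V => (Real.exp_pos _).le
  obtain ⟨M, hM⟩ := (isCompact_univ.image hcont).bddAbove
  have hint : Integrable (gibbsWt p A) μ := by
    refine Integrable.mono' (integrable_const M) hcont.aestronglyMeasurable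
      (Filter.Eventually.of_forall fun V => ?_)
    rw [Real.norm_eq_abs, abs_of_nonneg (hnonneg V)]
    exact hM ⟨V, Set.mem_univ V, rfl⟩
  have hlow : ∀ V ∈ s, Real.exp (-(N : ℝ) ^ 2 * K) ≤ gibbsWt p A V := by
    intro V hV
    unfold gibbsWt
    apply Real.exp_le_exp.2
    have h1 := hK V hV
    nlinarith [sq_nonneg (N : ℝ)]
  have h2 : Real.exp (-(N : ℝ) ^ 2 * K) * (μ s).toReal ≤
      ∫ V in s, gibbsWt p A V ∂μ :=
    by have := setIntegral_ge_of_const_le hs hfin hlow hint.integrableOn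
       rw [smul_eq_mul, mul_comm] at this
       exact this
  have h3 : ∫ V in s, gibbsWt p A V ∂μ ≤ ∫ V, gibbsWt p A V ∂μ :=
    setIntegral_le_integral hint (Filter.Eventually.of_forall hnonneg)
  have hZpos : 0 < ∫ V, gibbsWt p A V ∂μ :=
    lt_of_lt_of_le (mul_pos (Real.exp_pos _) htr) (h2.trans h3)
  rw [ENNReal.log_pos_real' htr, ← EReal.coe_add, EReal.coe_le_coe_iff]
  have h4 : Real.log (Real.exp (-(N : ℝ) ^ 2 * K) * (μ s).toReal) ≤
      Real.log (∫ V, gibbsWt p A V ∂μ) :=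
    Real.log_le_log (mul_pos (Real.exp_pos _) htr) (h2.trans h3)
  rw [Real.log_mul (Real.exp_pos _).ne' htr.ne', Real.log_exp] at h4
  linarith

end Aux10

/-- Theorem 3.5 (6): `χ_{orb,R}(τ) ≤ τ(p) + π_{orb,R}(p : (τ_i))`
for every self-adjoint `p`, and consequently `χ_{orb,R}(τ) ≤ η_{orb,R}(τ)`. -/
theorem statement10 {n : ℕ} (hn : 1 ≤ n) (r : Fin n → ℕ) (hr : ∀ i, 1 ≤ r i) (R : ℝ) (hR : 0 < R)
    (γ : ∀ N, Measure (UN N)) [∀ N, IsProbabilityMeasure (γ N)]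
    (hγ : ∀ N, (γ N).IsMulLeftInvariant)
    (τ : FAlg (gen r) →ₗ[ℂ] ℂ) (hτ : IsHermState τ) :
    (∀ p : FAlg (gen r), IsSA p →
      chiOrb γ R τ ≤ (((τ p).re : ℝ) : EReal) + piOrb γ R p (restr τ)) ∧
    chiOrb γ R τ ≤ etaOrb γ R τ := by
  have main : ∀ p : FAlg (gen r),
      chiOrb γ R τ ≤ (((τ p).re : ℝ) : EReal) + piOrb γ R p (restr τ) := by
    intro p
    obtain ⟨m₀, C, hC, hmom⟩ := momentApprox R τ hτ.1 p
    -- reduce to a fixed (m, δ)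
    have H : ∀ (m : ℕ) (δ : ℝ), 0 < δ →
        chiOrb γ R τ ≤
          (Filter.limsup
            (fun N : ℕ => ((((N : ℝ) ^ 2)⁻¹ : ℝ) : EReal) * piOrbN γ R p (restr τ) N m δ)
            Filter.atTop) + (((τ p).re : ℝ) : EReal) := by
      intro m δ hδ
      apply ereal_le_of_forall_eps
      intro ε hε
      set δ' : ℝ := min δ (ε / (C + 1)) with hδ'def
      have hC1 : (0 : ℝ) < C + 1 := by linarith
      have hδ'pos : 0 < δ' := lt_min hδ (div_pos hε hC1)
      have hδ'le : δ' ≤ δ := min_le_left _ _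
      set m' : ℕ := max m m₀ with hm'def
      set K' : ℝ := (τ p).re + C * δ' with hK'def
      have hK'le : K' ≤ (τ p).re + ε := by
        have h1 : δ' ≤ ε / (C + 1) := min_le_right _ _
        have h2 : C * δ' ≤ C * (ε / (C + 1)) := mul_le_mul_of_nonneg_left h1 hC
        have h3 : C * (ε / (C + 1)) ≤ ε := by
          rw [mul_div_assoc', div_le_iff₀ hC1]
          nlinarith
        simp only [hK'def]
        linarith
      -- Step A : chiOrb is at most the (m', δ') limsup
      have stepA : chiOrb γ R τ ≤
          Filter.limsup
            (fun N : ℕ => ((((N : ℝ) ^ 2)⁻¹ : ℝ) : EReal) *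
              ⨆ A ∈ microProd R (restr τ) N m' δ',
                ENNReal.log ((Measure.pi fun _ : Fin n => γ N) (orbSet R τ A m' δ')))
            Filter.atTop := by
        exact iInf_le_of_le m' (iInf_le_of_le δ' (iInf_le_of_le hδ'pos le_rfl))
      -- pointwise bound for N ≥ 1
      have pointwise : ∀ N : ℕ, 1 ≤ N →
          ((((N : ℝ) ^ 2)⁻¹ : ℝ) : EReal) *
              (⨆ A ∈ microProd R (restr τ) N m' δ',
                ENNReal.log ((Measure.pi fun _ : Fin n => γ N) (orbSet R τ A m' δ')))
            ≤ ((((N : ℝ) ^ 2)⁻¹ : ℝ) : EReal) * piOrbN γ R p (restr τ) N m δ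
                + ((K' : ℝ) : EReal) := by
        intro N hN
        have hNR : (0 : ℝ) < (N : ℝ) ^ 2 := by
          have : (0 : ℝ) < (N : ℝ) := by exact_mod_cast hN
          positivity
        have h1 : (⨆ A ∈ microProd R (restr τ) N m' δ',
              ENNReal.log ((Measure.pi fun _ : Fin n => γ N) (orbSet R τ A m' δ')))
            ≤ piOrbN γ R p (restr τ) N m δ + (((N : ℝ) ^ 2 * K' : ℝ) : EReal) := by
          refine iSup₂_le fun A hA => ?_
          have hA' : A ∈ microProd R (restr τ) N m δ :=
            microProd_mono (le_max_left m m₀) hδ'le hA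
          have hAherm : ∀ i j, (A i j).IsHermitian ∧ opNorm (A i j) ≤ R :=
            fun i j => (hA i).1 j
          have hmeas := orbSet_measurable τ hAherm m' δ'
          have hK : ∀ V ∈ orbSet R τ A m' δ',
              (trN N (evalA (conjFam V A) p)).re ≤ K' := by
            intro V hV
            have hmem : conjFam V A ∈ microFull R τ N m₀ δ' :=
              microFull_mono (le_max_right m m₀) le_rfl hV
            have habs := hmom N hN δ' (conjFam V A) hmem
            have hre : |(trN N (evalA (conjFam V A) p) - τ p).re| ≤
                ‖trN N (evalA (conjFam V A) p) - τ p‖ :=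
              Complex.abs_re_le_norm _
            rw [Complex.sub_re] at hre
            have := (abs_le.1 (hre.trans habs)).2
            simp only [hK'def]
            linarith
          have hkey := key_log_ineq (γ N) p A hmeas K' hK
          refine hkey.trans ?_
          refine add_le_add_left ?_ _
          exact le_iSup₂_of_le A hA' le_rfl
        calc ((((N : ℝ) ^ 2)⁻¹ : ℝ) : EReal) *
              (⨆ A ∈ microProd R (restr τ) N m' δ',
                ENNReal.log ((Measure.pi fun _ : Fin n => γ N) (orbSet R τ A m' δ')))
            ≤ ((((N : ℝ) ^ 2)⁻¹ : ℝ) : EReal) *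
                (piOrbN γ R p (restr τ) N m δ + (((N : ℝ) ^ 2 * K' : ℝ) : EReal)) :=
              mul_le_mul_of_nonneg_left h1 (by
                exact_mod_cast EReal.coe_nonneg.2 (inv_nonneg.2 hNR.le))
          _ ≤ ((((N : ℝ) ^ 2)⁻¹ : ℝ) : EReal) * piOrbN γ R p (restr τ) N m δ
                + ((((N : ℝ) ^ 2)⁻¹ * ((N : ℝ) ^ 2 * K') : ℝ) : EReal) :=
              ereal_mul_add_le _ _ (inv_pos.2 hNR) _
          _ = ((((N : ℝ) ^ 2)⁻¹ : ℝ) : EReal) * piOrbN γ R p (restr τ) N m δ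
                + ((K' : ℝ) : EReal) := by
              congr 2
              field_simp
      -- Step B : pass to the limsup
      have stepB : Filter.limsup
            (fun N : ℕ => ((((N : ℝ) ^ 2)⁻¹ : ℝ) : EReal) *
              ⨆ A ∈ microProd R (restr τ) N m' δ',
                ENNReal.log ((Measure.pi fun _ : Fin n => γ N) (orbSet R τ A m' δ')))
            Filter.atTop ≤
          Filter.limsup
            (fun N : ℕ => ((((N : ℝ) ^ 2)⁻¹ : ℝ) : EReal) * piOrbN γ R p (restr τ) N m δ
              + ((K' : ℝ) : EReal)) Filter.atTop := by
        refine Filter.limsup_le_limsup ?_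
        filter_upwards [Filter.eventually_ge_atTop 1] with N hN
        exact pointwise N hN
      -- Step C : pull out the constant
      have stepC : Filter.limsup
            (fun N : ℕ => ((((N : ℝ) ^ 2)⁻¹ : ℝ) : EReal) * piOrbN γ R p (restr τ) N m δ
              + ((K' : ℝ) : EReal)) Filter.atTop =
          (Filter.limsup
            (fun N : ℕ => ((((N : ℝ) ^ 2)⁻¹ : ℝ) : EReal) * piOrbN γ R p (restr τ) N m δ)
            Filter.atTop) + ((K' : ℝ) : EReal) :=
        ((addKIso K').limsup_apply).symm
      refine (stepA.trans (stepB.trans_eq stepC)).trans ?_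
      have : ((K' : ℝ) : EReal) ≤ (((τ p).re + ε : ℝ) : EReal) :=
        EReal.coe_le_coe_iff.2 hK'le
      calc (Filter.limsup
            (fun N : ℕ => ((((N : ℝ) ^ 2)⁻¹ : ℝ) : EReal) * piOrbN γ R p (restr τ) N m δ)
            Filter.atTop) + ((K' : ℝ) : EReal)
          ≤ (Filter.limsup
              (fun N : ℕ => ((((N : ℝ) ^ 2)⁻¹ : ℝ) : EReal) * piOrbN γ R p (restr τ) N m δ)
              Filter.atTop) + (((τ p).re + ε : ℝ) : EReal) := add_le_add_right this _
        _ = (Filter.limsup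
              (fun N : ℕ => ((((N : ℝ) ^ 2)⁻¹ : ℝ) : EReal) * piOrbN γ R p (restr τ) N m δ)
              Filter.atTop) + (((τ p).re : ℝ) : EReal) + ((ε : ℝ) : EReal) := by
            rw [EReal.coe_add, add_assoc]
    -- conclude via the order isomorphism
    have goal_eq : (((τ p).re : ℝ) : EReal) + piOrb γ R p (restr τ) =
        addKIso ((τ p).re) (piOrb γ R p (restr τ)) := by
      rw [addKIso_apply, add_comm]
    rw [goal_eq, ← (addKIso ((τ p).re)).symm_apply_le]
    unfold piOrb
    refine le_iInf fun m => le_iInf fun δ => le_iInf fun hδ => ?_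
    rw [(addKIso ((τ p).re)).symm_apply_le]
    exact H m δ hδ
  refine ⟨fun p _ => main p, ?_⟩
  unfold etaOrb etaOrbRel
  exact le_iInf fun h => le_iInf fun _ => main h

end OrbFP

end
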